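/- Let p > 1 and q = p/(p-1). Define c_p = 2^{(q-1)/q} π^{-1 + 1/(2q)} (Γ(q - 1/2)/Γ(q))^{1/q} and C_p for p ≥ 2 by C_p = (1/π)(∫_{-π}^{π} |sin s|^q (2 - 2cos s)^{q-1} ds)^{1/q}, and for 1 < p < 2 by C_p = (1/π)(∫_{-π}^{π} |cos s|^q (2 - 2cos s)^{q-1} ds)^{1/q}. Then c_p < C_p < 2 c_p. -/

import Mathlib

open Real intervalIntegral Set

section CpAux

lemma cont_rpow {a : ℝ} (ha : 0 < a) : Continuous fun x : ℝ => x ^ a :=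
  continuous_iff_continuousAt.2 fun x => Real.continuousAt_rpow_const x a (Or.inr ha.le)

lemma cont_rpow_comp {a : ℝ} (ha : 0 < a) {f : ℝ → ℝ} (hf : Continuous f) :
    Continuous fun x : ℝ => f x ^ a := (cont_rpow ha).comp hf

lemma sq_rpow {x : ℝ} (hx : 0 ≤ x) (c : ℝ) : (x^2) ^ c = x ^ (2*c) := by
  rw [← Real.rpow_natCast x 2, ← Real.rpow_mul hx]
  norm_num

lemma rpow_split1 {x : ℝ} (hx : 0 ≤ x) {y b : ℝ} (h : y = 1 + b) (hy : 1 + b ≠ 0) :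
    x ^ y = x * x ^ b := by rw [h, Real.rpow_add' hx hy, Real.rpow_one]

lemma rpow_split2 {x : ℝ} (hx : 0 ≤ x) {y b : ℝ} (h : y = b + 2) (hy : b + 2 ≠ 0) :
    x ^ y = x ^ b * x ^ (2:ℕ) := by
  rw [h, show (2:ℝ) = ((2:ℕ):ℝ) by norm_num,
    Real.rpow_add' hx (by exact_mod_cast hy), Real.rpow_natCast]

lemma real_beta {a b : ℝ} (ha : 0 < a) (hb : 0 < b) :
    ∫ x in (0:ℝ)..1, x ^ (a-1) * (1-x) ^ (b-1) =
      Real.Gamma a * Real.Gamma b / Real.Gamma (a+b) := by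
  have h := Complex.Gamma_mul_Gamma_eq_betaIntegral (s := (a:ℂ)) (t := (b:ℂ))
    (by simpa using ha) (by simpa using hb)
  have h2 : Complex.betaIntegral a b =
      ((∫ x in (0:ℝ)..1, x ^ (a-1) * (1-x) ^ (b-1) : ℝ) : ℂ) := by
    rw [Complex.betaIntegral, ← intervalIntegral.integral_ofReal]
    refine intervalIntegral.integral_congr fun x hx => ?_
    rw [Set.uIcc_of_le (by norm_num : (0:ℝ) ≤ 1)] at hx
    rw [show ((a:ℂ) - 1) = ((a-1:ℝ):ℂ) by push_cast; ring,
        show ((b:ℂ) - 1) = ((b-1:ℝ):ℂ) by push_cast; ring,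
        show (1 - (x:ℂ)) = ((1-x:ℝ):ℂ) by push_cast; ring,
        ← Complex.ofReal_cpow hx.1, ← Complex.ofReal_cpow (by linarith [hx.2])]
    push_cast
    ring
  have hG : Real.Gamma (a+b) ≠ 0 := (Real.Gamma_pos_of_pos (add_pos ha hb)).ne'
  rw [h2] at h
  rw [show ((a:ℂ)+b) = ((a+b:ℝ):ℂ) by push_cast; ring, Complex.Gamma_ofReal,
    Complex.Gamma_ofReal, Complex.Gamma_ofReal] at h
  have h' : Real.Gamma a * Real.Gamma b
      = Real.Gamma (a+b) * ∫ x in (0:ℝ)..1, x ^ (a-1) * (1-x) ^ (b-1) := by exact_mod_cast h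
  rw [eq_div_iff hG, h']; ring

lemma sin_rec {a : ℝ} (ha : 0 < a) :
    (a+2) * ∫ u in (0:ℝ)..(π/2), sin u ^ (a+2) = (a+1) * ∫ u in (0:ℝ)..(π/2), sin u ^ a := by
  have hpi : (0:ℝ) ≤ π/2 := by positivity
  have hd : ∀ u ∈ uIcc (0:ℝ) (π/2), HasDerivAt (fun v => cos v * sin v ^ (a+1))
      ((a+1) * sin u ^ a - (a+2) * sin u ^ (a+2)) u := by
    intro u hu
    rw [uIcc_of_le hpi] at hu
    have hs : 0 ≤ sin u := sin_nonneg_of_nonneg_of_le_pi hu.1 (by linarith [pi_pos, hu.2])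
    have h1 : HasDerivAt (fun v => sin v ^ (a+1)) (cos u * (a+1) * sin u ^ (a+1-1)) u :=
      (Real.hasDerivAt_sin u).rpow_const (Or.inr (by linarith))
    have e1 : a + 1 - 1 = a := by ring
    rw [e1] at h1
    have h2 : HasDerivAt (fun v => cos v * sin v ^ (a+1)) _ u := (Real.hasDerivAt_cos u).mul h1
    convert h2 using 1
    have e2 : sin u ^ (a+2) = sin u * sin u ^ (a+1) :=
      rpow_split1 hs (by ring) (ne_of_gt (by linarith))
    have e3 : sin u ^ (a+2) = sin u ^ a * sin u ^ (2:ℕ) :=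
      rpow_split2 hs rfl (ne_of_gt (by linarith))
    have e4 : cos u ^ (2:ℕ) = 1 - sin u ^ (2:ℕ) := Real.cos_sq' u
    linear_combination (-1 : ℝ) * e2 - (a+1) * e3 - ((a+1) * sin u ^ a) * e4
  have c1 : Continuous fun u : ℝ => (a+1) * sin u ^ a :=
    continuous_const.mul (cont_rpow_comp ha Real.continuous_sin)
  have c2 : Continuous fun u : ℝ => (a+2) * sin u ^ (a+2) :=
    continuous_const.mul (cont_rpow_comp (by linarith) Real.continuous_sin)
  have h0 : ∫ u in (0:ℝ)..(π/2), ((a+1) * sin u ^ a - (a+2) * sin u ^ (a+2)) = 0 := by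
    rw [intervalIntegral.integral_eq_sub_of_hasDerivAt hd ((c1.sub c2).intervalIntegrable _ _)]
    simp [Real.zero_rpow (show a+1 ≠ 0 by linarith)]
  rw [intervalIntegral.integral_sub (c1.intervalIntegrable _ _) (c2.intervalIntegrable _ _),
    intervalIntegral.integral_const_mul, intervalIntegral.integral_const_mul] at h0
  linarith

lemma K_eq {q : ℝ} (hq : 1 < q) :
    Real.sqrt π * Real.Gamma (q - 1/2) / Real.Gamma q
      = 2 * ∫ u in (0:ℝ)..(π/2), sin u ^ (2*q-2) := by
  have hq0 : (0:ℝ) < q := by linarith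
  have hbeta0 := real_beta (a := q + 1/2) (b := 3/2) (by linarith) (by norm_num)
  rw [show q + 1/2 - 1 = q - 1/2 by ring, show (3/2 - 1 : ℝ) = 1/2 by norm_num,
    show q + 1/2 + 3/2 = q + 2 by ring] at hbeta0
  -- substitution x = sin^2 u
  have g_cont : Continuous fun x : ℝ => x ^ (q-1/2) * (1-x) ^ ((1:ℝ)/2) :=
    (cont_rpow (by linarith)).mul
      ((cont_rpow one_half_pos).comp (continuous_const.sub continuous_id))
  have hderiv : ∀ x ∈ uIcc (0:ℝ) (π/2), HasDerivAt (fun u => sin u ^ 2) (2*sin x*cos x) x := by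
    intro x _
    have : HasDerivAt (fun u => sin u ^ 2) _ x := (Real.hasDerivAt_sin x).pow 2
    convert this using 1
    push_cast
    ring
  have hsub := intervalIntegral.integral_comp_smul_deriv hderiv
    (((continuous_const.mul Real.continuous_sin).mul Real.continuous_cos).continuousOn) g_cont
  rw [Real.sin_zero, Real.sin_pi_div_two] at hsub
  norm_num at hsub
  have hpt : EqOn (fun u => 2 * sin u * cos u * ((sin u^2) ^ (q-1/2) * (1-sin u^2) ^ ((1:ℝ)/2)))
      (fun u => 2 * sin u ^ (2*q) - 2 * sin u ^ (2*q+2)) (uIcc (0:ℝ) (π/2)) := by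
    intro u hu
    rw [uIcc_of_le (by positivity : (0:ℝ) ≤ π/2)] at hu
    have hs : 0 ≤ sin u := sin_nonneg_of_nonneg_of_le_pi hu.1 (by linarith [pi_pos, hu.2])
    have hc : 0 ≤ cos u := Real.cos_nonneg_of_mem_Icc ⟨by linarith [pi_pos, hu.1], hu.2⟩
    simp only
    have E0 : (sin u^2) ^ (q-1/2) = sin u ^ (2*q-1) := by
      rw [sq_rpow hs, show 2*(q-1/2) = 2*q-1 by ring]
    have E0' : (1-sin u^2) ^ ((1:ℝ)/2) = cos u := by
      rw [← Real.cos_sq' u, sq_rpow hc, show (2*((1:ℝ)/2)) = 1 by norm_num, Real.rpow_one]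
    rw [E0, E0']
    have E1 : sin u ^ (2*q) = sin u * sin u ^ (2*q-1) :=
      rpow_split1 hs (by ring) (ne_of_gt (by linarith))
    have E2 : sin u ^ (2*q+2) = sin u ^ (2*q) * sin u ^ (2:ℕ) :=
      rpow_split2 hs rfl (ne_of_gt (by linarith))
    have E3 : cos u ^ (2:ℕ) = 1 - sin u ^ (2:ℕ) := Real.cos_sq' u
    linear_combination (-2*cos u^2) * E1 + (2 * sin u ^ (2*q)) * E3 + 2 * E2
  rw [intervalIntegral.integral_congr hpt] at hsub
  have cK2 : Continuous fun u : ℝ => sin u ^ (2*q) :=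
    cont_rpow_comp (by linarith) Real.continuous_sin
  have cK3 : Continuous fun u : ℝ => sin u ^ (2*q+2) :=
    cont_rpow_comp (by linarith) Real.continuous_sin
  have hsplit : ∫ u in (0:ℝ)..(π/2), (2 * sin u ^ (2*q) - 2 * sin u ^ (2*q+2))
      = 2 * (∫ u in (0:ℝ)..(π/2), sin u ^ (2*q)) - 2 * ∫ u in (0:ℝ)..(π/2), sin u ^ (2*q+2) := by
    rw [intervalIntegral.integral_sub (f := fun u => 2 * sin u ^ (2*q)) (g := fun u => 2 * sin u ^ (2*q+2)) ((continuous_const.mul cK2).intervalIntegrable _ _)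
      ((continuous_const.mul cK3).intervalIntegrable _ _), intervalIntegral.integral_const_mul,
      intervalIntegral.integral_const_mul]
  rw [hsplit, hbeta0] at hsub
  set K1 := ∫ u in (0:ℝ)..(π/2), sin u ^ (2*q-2) with hK1
  set K2 := ∫ u in (0:ℝ)..(π/2), sin u ^ (2*q) with hK2
  set K3 := ∫ u in (0:ℝ)..(π/2), sin u ^ (2*q+2) with hK3
  have hrec1 : (2*q) * K2 = (2*q-1) * K1 := by
    have := sin_rec (a := 2*q-2) (by linarith)
    rw [show 2*q-2+2 = 2*q by ring, show 2*q-2+1 = 2*q-1 by ring] at this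
    exact this
  have hrec2 : (2*q+2) * K3 = (2*q+1) * K2 := sin_rec (a := 2*q) (by linarith)
  have hGq : (0:ℝ) < Real.Gamma q := Real.Gamma_pos_of_pos (by linarith)
  have hG1 : Real.Gamma (q+1/2) = (q-1/2) * Real.Gamma (q-1/2) := by
    rw [show q+1/2 = (q-1/2)+1 by ring, Real.Gamma_add_one (ne_of_gt (by linarith))]
  have hG32 : Real.Gamma (3/2:ℝ) = Real.sqrt π / 2 := by
    rw [show (3/2:ℝ) = 1/2 + 1 by norm_num, Real.Gamma_add_one (by norm_num),
      Real.Gamma_one_half_eq]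
    ring
  have hGq2 : Real.Gamma (q+2) = (q+1) * (q * Real.Gamma q) := by
    rw [show q+2 = (q+1)+1 by ring, Real.Gamma_add_one (ne_of_gt (by linarith)),
      Real.Gamma_add_one (ne_of_gt (by linarith))]
  rw [hG1, hG32, hGq2] at hsub
  have hval : (2*q)*(2*q+2)*(2*K2 - 2*K3) = 2*(2*q-1)*K1 := by
    linear_combination 2 * hrec1 - 4*q * hrec2
  rw [hsub] at hval
  rw [div_eq_iff hGq.ne']
  have hC : ((q+1)*(q*Real.Gamma q)) ≠ 0 :=
    ne_of_gt (mul_pos (by linarith) (mul_pos (by linarith) hGq))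
  rw [← mul_div_assoc, div_eq_iff hC] at hval
  have hne : ((2*q-1)*(q*(q+1)):ℝ) ≠ 0 :=
    ne_of_gt (mul_pos (by linarith) (mul_pos (by linarith) (by linarith)))
  have hgoal' : Real.sqrt π * Real.Gamma (q-1/2) * ((2*q-1)*(q*(q+1)))
      = 2 * K1 * Real.Gamma q * ((2*q-1)*(q*(q+1))) := by linear_combination hval
  have hfin := mul_right_cancel₀ hne hgoal'
  linarith

end CpAux
section CpAux2

-- strict inequality of integrals with ≤ on [0,π/2] and < on (0,π/4)
lemma integral_lt_crit {f g : ℝ → ℝ} (hf : Continuous f) (hg : Continuous g)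
    (hle : ∀ u ∈ Icc (0:ℝ) (π/2), f u ≤ g u) (hlt : ∀ u ∈ Ioo (0:ℝ) (π/4), f u < g u) :
    (∫ u in (0:ℝ)..(π/2), f u) < ∫ u in (0:ℝ)..(π/2), g u := by
  have h4 : (0:ℝ) < π/4 := by positivity
  have h42 : π/4 ≤ π/2 := by linarith [pi_pos]
  have hi : Continuous fun u => g u - f u := hg.sub hf
  have e : (∫ u in (0:ℝ)..(π/4), (g u - f u)) + ∫ u in (π/4:ℝ)..(π/2), (g u - f u)
      = ∫ u in (0:ℝ)..(π/2), (g u - f u) :=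
    intervalIntegral.integral_add_adjacent_intervals (hi.intervalIntegrable _ _)
      (hi.intervalIntegrable _ _)
  have p1 : 0 < ∫ u in (0:ℝ)..(π/4), (g u - f u) :=
    intervalIntegral.intervalIntegral_pos_of_pos_on (hi.intervalIntegrable _ _)
      (fun x hx => sub_pos.2 (hlt x hx)) h4
  have p2 : 0 ≤ ∫ u in (π/4:ℝ)..(π/2), (g u - f u) :=
    intervalIntegral.integral_nonneg h42
      (fun u hu => sub_nonneg.2 (hle u ⟨le_trans h4.le hu.1, hu.2⟩))
  have hsub : ∫ u in (0:ℝ)..(π/2), (g u - f u)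
      = (∫ u in (0:ℝ)..(π/2), g u) - ∫ u in (0:ℝ)..(π/2), f u :=
    intervalIntegral.integral_sub (hg.intervalIntegrable _ _) (hf.intervalIntegrable _ _)
  linarith

lemma reflect_half (f : ℝ → ℝ) :
    ∫ u in (0:ℝ)..(π/2), f (π/2 - u) = ∫ u in (0:ℝ)..(π/2), f u := by
  have := intervalIntegral.integral_comp_sub_left (a := (0:ℝ)) (b := π/2) f (π/2)
  simpa using this

lemma half_angle_split (f : ℝ → ℝ) (hf : Continuous f) (hsymm : ∀ x, f (π - x) = f x) :
    2 * ∫ u in (0:ℝ)..(π/2), f (2*u) = 2 * ∫ x in (0:ℝ)..(π/2), f x := by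
  have h1 : (2:ℝ) • ∫ u in (0:ℝ)..(π/2), f (2*u) = ∫ x in (0:ℝ)..(π), f x := by
    have := intervalIntegral.smul_integral_comp_mul_left (f := f) (a := (0:ℝ)) (b := π/2) 2
    rw [mul_zero, show (2:ℝ)*(π/2) = π by ring] at this
    exact this
  have h2 : ∫ x in (π/2:ℝ)..π, f x = ∫ x in (0:ℝ)..(π/2), f x := by
    have h := intervalIntegral.integral_comp_sub_left (a := (0:ℝ)) (b := π/2) f π
    rw [show π - π/2 = π/2 by ring, sub_zero] at h
    rw [← h]
    exact intervalIntegral.integral_congr fun x _ => hsymm x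
  have h3 := intervalIntegral.integral_add_adjacent_intervals (μ := MeasureTheory.volume)
      (hf.intervalIntegrable 0 (π/2)) (hf.intervalIntegrable (π/2) π)
  rw [smul_eq_mul] at h1
  rw [h1, ← h3, h2]
  ring

-- ∫ sin^c decreasing in exponent, strictly
lemma sinpow_lt {b c : ℝ} (hb : 0 < b) (hbc : b < c) :
    (∫ u in (0:ℝ)..(π/2), sin u ^ c) < ∫ u in (0:ℝ)..(π/2), sin u ^ b := by
  apply integral_lt_crit (cont_rpow_comp (hb.trans hbc) Real.continuous_sin)
    (cont_rpow_comp hb Real.continuous_sin)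
  · intro u hu
    rcases eq_or_lt_of_le (sin_nonneg_of_nonneg_of_le_pi hu.1
      (by linarith [pi_pos, hu.2])) with h | h
    · rw [← h, Real.zero_rpow (by linarith), Real.zero_rpow (by linarith)]
    · exact Real.rpow_le_rpow_of_exponent_ge h (Real.sin_le_one u) hbc.le
  · intro u hu
    have h1 : 0 < sin u := Real.sin_pos_of_pos_of_lt_pi hu.1 (by linarith [pi_pos, hu.2])
    have h2 : sin u < 1 := by
      have hmem1 : u ∈ Icc (-(π/2)) (π/2) := ⟨by linarith [pi_pos, hu.1], by linarith [hu.2, pi_pos]⟩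
      have hmem2 : (π/2) ∈ Icc (-(π/2)) (π/2) := ⟨by linarith [pi_pos], le_refl _⟩
      have := Real.strictMonoOn_sin hmem1 hmem2 (by linarith [hu.2, pi_pos])
      rwa [Real.sin_pi_div_two] at this
    exact Real.rpow_lt_rpow_of_exponent_gt h1 h2 hbc

-- upper bound: ∫ w·sin^{2q-2} < ∫ sin^{2q-2} when 0 ≤ w ≤ 1, w < 1 on (0,π/4)
lemma T_lt_K {q : ℝ} (hq : 1 < q) {w : ℝ → ℝ} (hw : Continuous w)
    (h0 : ∀ u ∈ Icc (0:ℝ) (π/2), 0 ≤ w u) (h1 : ∀ u ∈ Icc (0:ℝ) (π/2), w u ≤ 1)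
    (hlt : ∀ u ∈ Ioo (0:ℝ) (π/4), w u < 1) :
    (∫ u in (0:ℝ)..(π/2), w u * sin u ^ (2*q-2)) < ∫ u in (0:ℝ)..(π/2), sin u ^ (2*q-2) := by
  apply integral_lt_crit (hw.mul (cont_rpow_comp (by linarith) Real.continuous_sin))
    (cont_rpow_comp (by linarith) Real.continuous_sin)
  · intro u hu
    exact mul_le_of_le_one_left (Real.rpow_nonneg (sin_nonneg_of_nonneg_of_le_pi hu.1
      (by linarith [pi_pos, hu.2])) _) (h1 u hu)
  · intro u hu
    have hpos : 0 < sin u ^ (2*q-2) :=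
      Real.rpow_pos_of_pos (Real.sin_pos_of_pos_of_lt_pi hu.1 (by linarith [pi_pos, hu.2])) _
    calc w u * sin u ^ (2*q-2) < 1 * sin u ^ (2*q-2) :=
          mul_lt_mul_of_pos_right (hlt u hu) hpos
      _ = sin u ^ (2*q-2) := one_mul _

end CpAux2
section CpAux3

lemma rpow_congr {x a b : ℝ} (h : a = b) : x ^ a = x ^ b := by rw [h]

lemma K_pos {q : ℝ} (hq : 1 < q) : 0 < ∫ u in (0:ℝ)..(π/2), sin u ^ (2*q-2) :=
  intervalIntegral.intervalIntegral_pos_of_pos_on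
    ((cont_rpow_comp (by linarith) Real.continuous_sin).intervalIntegrable _ _)
    (fun x hx => Real.rpow_pos_of_pos
      (Real.sin_pos_of_pos_of_lt_pi hx.1 (by linarith [pi_pos, hx.2])) _)
    (by positivity)

lemma sum_rpow_ge {q : ℝ} (hq : 1 < q) {u : ℝ} (hu : u ∈ Icc (0:ℝ) (π/2)) :
    (2:ℝ)^(1-q) ≤ sin u ^ (2*q-2) + cos u ^ (2*q-2) := by
  have hs : 0 ≤ sin u := sin_nonneg_of_nonneg_of_le_pi hu.1 (by linarith [pi_pos, hu.2])
  have hc : 0 ≤ cos u := Real.cos_nonneg_of_mem_Icc ⟨by linarith [pi_pos, hu.1], hu.2⟩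
  have hhalf : (2:ℝ)^(1-q) = ((1:ℝ)/2) ^ (q-1) := by
    rw [show (1:ℝ)/2 = 2⁻¹ by norm_num, ← Real.rpow_neg_one 2,
      ← Real.rpow_mul (by norm_num : (0:ℝ) ≤ 2)]
    exact rpow_congr (by ring)
  have key : ∀ x : ℝ, 0 ≤ x → (1:ℝ)/2 ≤ x^2 → (2:ℝ)^(1-q) ≤ x ^ (2*q-2) := by
    intro x hx h2
    rw [hhalf]
    calc ((1:ℝ)/2) ^ (q-1) ≤ (x^2) ^ (q-1) := Real.rpow_le_rpow (by norm_num) h2 (by linarith)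
      _ = x ^ (2*(q-1)) := sq_rpow hx _
      _ = x ^ (2*q-2) := rpow_congr (by ring)
  rcases le_total u (π/4) with h | h
  · have hcge : Real.sqrt 2 / 2 ≤ cos u := by
      rw [← Real.cos_pi_div_four]
      have h4 : (π/4 : ℝ) ∈ Icc (0:ℝ) π := ⟨by positivity, by linarith [pi_pos]⟩
      have hu' : u ∈ Icc (0:ℝ) π := ⟨hu.1, by linarith [pi_pos, hu.2]⟩
      exact Real.strictAntiOn_cos.antitoneOn hu' h4 h
    have h2 : (1:ℝ)/2 ≤ cos u ^ 2 := by
      nlinarith [Real.sq_sqrt (by norm_num : (0:ℝ) ≤ 2), Real.sqrt_nonneg 2]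
    have h3 := key (cos u) hc h2
    have hsn : 0 ≤ sin u ^ (2*q-2) := Real.rpow_nonneg hs _
    linarith
  · have hsge : Real.sqrt 2 / 2 ≤ sin u := by
      rw [← Real.sin_pi_div_four]
      have h4 : (π/4 : ℝ) ∈ Icc (-(π/2)) (π/2) := ⟨by linarith [pi_pos], by linarith [pi_pos]⟩
      have hu' : u ∈ Icc (-(π/2)) (π/2) := ⟨by linarith [pi_pos, hu.1], hu.2⟩
      exact Real.strictMonoOn_sin.monotoneOn h4 hu' h
    have h2 : (1:ℝ)/2 ≤ sin u ^ 2 := by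
      nlinarith [Real.sq_sqrt (by norm_num : (0:ℝ) ≤ 2), Real.sqrt_nonneg 2]
    have h3 := key (sin u) hs h2
    have hcn : 0 ≤ cos u ^ (2*q-2) := Real.rpow_nonneg hc _
    linarith

lemma abs_cos_two_int {q : ℝ} (hq0 : 0 < q) :
    ∫ u in (0:ℝ)..(π/2), |cos (2*u)| ^ q = ∫ u in (0:ℝ)..(π/2), sin u ^ q := by
  have hf : Continuous fun x : ℝ => |cos x| ^ q :=
    cont_rpow_comp hq0 (continuous_abs.comp Real.continuous_cos)
  have hsymm : ∀ x, |cos (π - x)| ^ q = |cos x| ^ q := by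
    intro x; rw [Real.cos_pi_sub, abs_neg]
  have h1 : 2 * (∫ u in (0:ℝ)..(π/2), |cos (2*u)| ^ q)
      = 2 * ∫ x in (0:ℝ)..(π/2), |cos x| ^ q := half_angle_split _ hf hsymm
  have h2 : (∫ x in (0:ℝ)..(π/2), |cos (π/2 - x)| ^ q)
      = ∫ x in (0:ℝ)..(π/2), |cos x| ^ q := reflect_half (fun x => |cos x| ^ q)
  have h3 : (∫ x in (0:ℝ)..(π/2), |cos (π/2 - x)| ^ q)
      = ∫ x in (0:ℝ)..(π/2), sin x ^ q := by
    apply intervalIntegral.integral_congr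
    intro x hx
    rw [uIcc_of_le (by positivity : (0:ℝ) ≤ π/2)] at hx
    simp only
    rw [Real.cos_pi_div_two_sub,
      abs_of_nonneg (sin_nonneg_of_nonneg_of_le_pi hx.1 (by linarith [pi_pos, hx.2]))]
  linarith

lemma sin_two_int {c : ℝ} (hc0 : 0 < c) :
    ∫ u in (0:ℝ)..(π/2), sin (2*u) ^ c = ∫ u in (0:ℝ)..(π/2), sin u ^ c := by
  have hf : Continuous fun x : ℝ => sin x ^ c := cont_rpow_comp hc0 Real.continuous_sin
  have hsymm : ∀ x, sin (π - x) ^ c = sin x ^ c := fun x => by rw [Real.sin_pi_sub]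
  have h1 : 2 * (∫ u in (0:ℝ)..(π/2), sin (2*u) ^ c)
      = 2 * ∫ x in (0:ℝ)..(π/2), sin x ^ c := half_angle_split _ hf hsymm
  linarith

lemma S_bound {q : ℝ} (hq : 1 < q) :
    (∫ u in (0:ℝ)..(π/2), sin u ^ (2*q-2)) + (1/2:ℝ)^(2*q-2) * (2 - π/2)
      ≤ 2 * ∫ u in (0:ℝ)..(π/2), sin u ^ (2*q-1) := by
  have h6 : (0:ℝ) ≤ π/6 := by positivity
  have h62 : (π/6:ℝ) ≤ π/2 := by linarith [pi_pos]
  set c : ℝ := (1/2:ℝ)^(2*q-2) with hcdef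
  have hD : Continuous fun u : ℝ => 2 * sin u ^ (2*q-1) - sin u ^ (2*q-2) :=
    (continuous_const.mul (cont_rpow_comp (by linarith) Real.continuous_sin)).sub
      (cont_rpow_comp (by linarith) Real.continuous_sin)
  have hGc : Continuous fun u : ℝ => c * (2 * sin u - 1) :=
    continuous_const.mul ((continuous_const.mul Real.continuous_sin).sub continuous_const)
  have hpt : ∀ u ∈ Icc (0:ℝ) (π/2),
      (sin u ^ (2*q-2)) * (2*sin u - 1) = 2*sin u ^ (2*q-1) - sin u ^ (2*q-2) := by
    intro u hu
    have hs : 0 ≤ sin u := sin_nonneg_of_nonneg_of_le_pi hu.1 (by linarith [pi_pos, hu.2])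
    have E : sin u ^ (2*q-1) = sin u * sin u ^ (2*q-2) :=
      rpow_split1 hs (by ring) (ne_of_gt (by linarith))
    linear_combination (-2:ℝ) * E
  have hmono1 : (∫ u in (0:ℝ)..(π/6), c * (2*sin u - 1))
      ≤ ∫ u in (0:ℝ)..(π/6), (2*sin u ^ (2*q-1) - sin u ^ (2*q-2)) := by
    apply intervalIntegral.integral_mono_on h6 (hGc.intervalIntegrable _ _)
      (hD.intervalIntegrable _ _)
    intro u hu
    have hu2 : u ∈ Icc (0:ℝ) (π/2) := ⟨hu.1, le_trans hu.2 h62⟩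
    have hs : 0 ≤ sin u := sin_nonneg_of_nonneg_of_le_pi hu.1 (by linarith [pi_pos, hu2.2])
    have hsle : sin u ≤ 1/2 := by
      rw [← Real.sin_pi_div_six]
      exact Real.strictMonoOn_sin.monotoneOn
        ⟨by linarith [pi_pos, hu.1], by linarith [hu2.2]⟩
        ⟨by linarith [pi_pos], by linarith [pi_pos]⟩ hu.2
    have ht : sin u ^ (2*q-2) ≤ c := by
      rw [hcdef]; exact Real.rpow_le_rpow hs hsle (by linarith)
    rw [← hpt u hu2]
    exact mul_le_mul_of_nonpos_right ht (by linarith)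
  have hmono2 : (∫ u in (π/6:ℝ)..(π/2), c * (2*sin u - 1))
      ≤ ∫ u in (π/6:ℝ)..(π/2), (2*sin u ^ (2*q-1) - sin u ^ (2*q-2)) := by
    apply intervalIntegral.integral_mono_on h62 (hGc.intervalIntegrable _ _)
      (hD.intervalIntegrable _ _)
    intro u hu
    have hu2 : u ∈ Icc (0:ℝ) (π/2) := ⟨le_trans h6 hu.1, hu.2⟩
    have hs : 0 ≤ sin u := sin_nonneg_of_nonneg_of_le_pi hu2.1 (by linarith [pi_pos, hu2.2])
    have hsge : 1/2 ≤ sin u := by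
      rw [← Real.sin_pi_div_six]
      exact Real.strictMonoOn_sin.monotoneOn
        ⟨by linarith [pi_pos], by linarith [pi_pos]⟩
        ⟨by linarith [pi_pos, hu2.1], hu2.2⟩ hu.1
    have ht : c ≤ sin u ^ (2*q-2) := by
      rw [hcdef]; exact Real.rpow_le_rpow (by norm_num) hsge (by linarith)
    rw [← hpt u hu2]
    exact mul_le_mul_of_nonneg_right ht (by linarith)
  have hadd1 := intervalIntegral.integral_add_adjacent_intervals (μ := MeasureTheory.volume)
    (hGc.intervalIntegrable 0 (π/6)) (hGc.intervalIntegrable (π/6) (π/2))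
  have hadd2 := intervalIntegral.integral_add_adjacent_intervals (μ := MeasureTheory.volume)
    (hD.intervalIntegrable 0 (π/6)) (hD.intervalIntegrable (π/6) (π/2))
  have hsin_int : ∫ u in (0:ℝ)..(π/2), (2*sin u - 1) = 2 - π/2 := by
    rw [intervalIntegral.integral_sub (f := fun u => 2 * sin u) (g := fun _ => (1:ℝ))
      ((continuous_const.mul Real.continuous_sin).intervalIntegrable _ _)
      (continuous_const.intervalIntegrable _ _),
      intervalIntegral.integral_const_mul, integral_sin]
    simp [Real.cos_pi_div_two]
  have hlhs : ∫ u in (0:ℝ)..(π/2), c * (2*sin u - 1) = c * (2 - π/2) := by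
    rw [intervalIntegral.integral_const_mul, hsin_int]
  have hrhs : ∫ u in (0:ℝ)..(π/2), (2*sin u ^ (2*q-1) - sin u ^ (2*q-2))
      = 2*(∫ u in (0:ℝ)..(π/2), sin u ^ (2*q-1)) - ∫ u in (0:ℝ)..(π/2), sin u ^ (2*q-2) := by
    rw [intervalIntegral.integral_sub (f := fun u => 2 * sin u ^ (2*q-1)) (g := fun u => sin u ^ (2*q-2))
      ((continuous_const.mul (cont_rpow_comp (by linarith) Real.continuous_sin)).intervalIntegrable _ _)
      ((cont_rpow_comp (by linarith : (0:ℝ) < 2*q-2) Real.continuous_sin).intervalIntegrable _ _),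
      intervalIntegral.integral_const_mul]
  linarith [hmono1, hmono2, hadd1, hadd2, hlhs, hrhs]

end CpAux3
section CpAux4

lemma Tsin_lower {q : ℝ} (hq : 1 < q) :
    (2:ℝ)^(-q) * (∫ u in (0:ℝ)..(π/2), sin u ^ (2*q-2))
      < ∫ u in (0:ℝ)..(π/2), sin (2*u) ^ q * sin u ^ (2*q-2) := by
  have hsin2 : Continuous fun u : ℝ => sin (2*u) :=
    Real.continuous_sin.comp (continuous_const.mul continuous_id)
  have hTc : Continuous fun u : ℝ => sin (2*u) ^ q * sin u ^ (2*q-2) :=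
    (cont_rpow_comp (by linarith) hsin2).mul (cont_rpow_comp (by linarith) Real.continuous_sin)
  have hTc' : Continuous fun u : ℝ => sin (2*u) ^ q * cos u ^ (2*q-2) :=
    (cont_rpow_comp (by linarith) hsin2).mul (cont_rpow_comp (by linarith) Real.continuous_cos)
  set T := ∫ u in (0:ℝ)..(π/2), sin (2*u) ^ q * sin u ^ (2*q-2) with hT
  set K := ∫ u in (0:ℝ)..(π/2), sin u ^ (2*q-2) with hK
  set S := ∫ u in (0:ℝ)..(π/2), sin u ^ (2*q-1) with hS
  have hrefl : T = ∫ u in (0:ℝ)..(π/2), sin (2*u) ^ q * cos u ^ (2*q-2) := by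
    have h0 : (∫ u in (0:ℝ)..(π/2), sin (2*(π/2 - u)) ^ q * sin (π/2 - u) ^ (2*q-2)) = T :=
      reflect_half (fun v => sin (2*v) ^ q * sin v ^ (2*q-2))
    rw [← h0]
    apply intervalIntegral.integral_congr
    intro x _
    simp only
    rw [show 2*(π/2 - x) = π - 2*x by ring, Real.sin_pi_sub, Real.sin_pi_div_two_sub]
  have h2T : 2 * T = ∫ u in (0:ℝ)..(π/2),
      sin (2*u) ^ q * (sin u ^ (2*q-2) + cos u ^ (2*q-2)) := by
    rw [two_mul]
    nth_rewrite 2 [hrefl]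
    rw [hT, ← intervalIntegral.integral_add (hTc.intervalIntegrable _ _) (hTc'.intervalIntegrable _ _)]
    apply intervalIntegral.integral_congr
    intro x _
    simp only
    ring
  have hpt : ∀ u ∈ Icc (0:ℝ) (π/2),
      (2:ℝ)^(2-q) * sin (2*u) ^ (2*q-1)
        ≤ sin (2*u) ^ q * (sin u ^ (2*q-2) + cos u ^ (2*q-2)) := by
    intro u hu
    have hs : 0 ≤ sin u := sin_nonneg_of_nonneg_of_le_pi hu.1 (by linarith [pi_pos, hu.2])
    have hc : 0 ≤ cos u := Real.cos_nonneg_of_mem_Icc ⟨by linarith [pi_pos, hu.1], hu.2⟩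
    have hs2 : 0 ≤ sin (2*u) :=
      sin_nonneg_of_nonneg_of_le_pi (by linarith [hu.1]) (by linarith [hu.2])
    have hA0 : 0 ≤ sin u ^ (q-1) := Real.rpow_nonneg hs _
    have hB0 : 0 ≤ cos u ^ (q-1) := Real.rpow_nonneg hc _
    have hA2 : sin u ^ (2*q-2) = sin u ^ (q-1) * sin u ^ (q-1) :=
      (rpow_congr (show 2*q-2 = (q-1)+(q-1) by ring)).trans
        (Real.rpow_add' hs (ne_of_gt (by linarith)))
    have hB2 : cos u ^ (2*q-2) = cos u ^ (q-1) * cos u ^ (q-1) :=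
      (rpow_congr (show 2*q-2 = (q-1)+(q-1) by ring)).trans
        (Real.rpow_add' hc (ne_of_gt (by linarith)))
    have hAB : sin u ^ (q-1) * cos u ^ (q-1) = (sin u * cos u) ^ (q-1) :=
      (Real.mul_rpow hs hc).symm
    have hsc : sin u * cos u = sin (2*u) / 2 := by rw [Real.sin_two_mul]; ring
    have hdiv : (sin (2*u) / 2) ^ (q-1) = sin (2*u) ^ (q-1) / 2 ^ (q-1) :=
      Real.div_rpow hs2 (show (0:ℝ) ≤ 2 by norm_num) (q-1)
    have hq2 : sin (2*u) ^ (2*q-1) = sin (2*u) ^ q * sin (2*u) ^ (q-1) :=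
      (rpow_congr (show 2*q-1 = q+(q-1) by ring)).trans
        (Real.rpow_add' hs2 (ne_of_gt (by linarith)))
    have h2p : (2:ℝ)^(2-q) = 2 * ((2:ℝ)^(q-1))⁻¹ := by
      rw [rpow_congr (show (2-q:ℝ) = 1 + -(q-1) by ring), Real.rpow_add two_pos,
        Real.rpow_one, Real.rpow_neg (by norm_num : (0:ℝ) ≤ 2)]
    have hkey : 2 * (sin u ^ (q-1) * cos u ^ (q-1))
        ≤ sin u ^ (q-1) * sin u ^ (q-1) + cos u ^ (q-1) * cos u ^ (q-1) := by
      nlinarith [sq_nonneg (sin u ^ (q-1) - cos u ^ (q-1))]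
    have h2pow : (0:ℝ) < (2:ℝ)^(q-1) := Real.rpow_pos_of_pos two_pos _
    calc (2:ℝ)^(2-q) * sin (2*u) ^ (2*q-1)
        = sin (2*u) ^ q * (2 * (sin u ^ (q-1) * cos u ^ (q-1))) := by
          rw [hq2, h2p, hAB, hsc, hdiv]
          field_simp
      _ ≤ sin (2*u) ^ q * (sin u ^ (q-1) * sin u ^ (q-1) + cos u ^ (q-1) * cos u ^ (q-1)) :=
          mul_le_mul_of_nonneg_left hkey (Real.rpow_nonneg hs2 _)
      _ = sin (2*u) ^ q * (sin u ^ (2*q-2) + cos u ^ (2*q-2)) := by rw [hA2, hB2]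
  have hint : (2:ℝ)^(2-q) * (∫ u in (0:ℝ)..(π/2), sin (2*u) ^ (2*q-1)) ≤ 2 * T := by
    rw [h2T, ← intervalIntegral.integral_const_mul]
    apply intervalIntegral.integral_mono_on (by positivity)
      ((continuous_const.mul (cont_rpow_comp (by linarith) hsin2)).intervalIntegrable _ _)
      (((cont_rpow_comp (by linarith : (0:ℝ) < q) hsin2).mul
        ((cont_rpow_comp (by linarith : (0:ℝ) < 2*q-2) Real.continuous_sin).add
          (cont_rpow_comp (by linarith : (0:ℝ) < 2*q-2) Real.continuous_cos))).intervalIntegrable _ _)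
    exact hpt
  have hS2 : (∫ u in (0:ℝ)..(π/2), sin (2*u) ^ (2*q-1)) = S := sin_two_int (by linarith)
  rw [hS2] at hint
  have e1 : (2:ℝ)^(2-q) = 4 * (2:ℝ)^(-q) := by
    have h0 : (2:ℝ)^(2-q) = (2:ℝ)^(2:ℝ) * 2^(-q) :=
      (rpow_congr (by ring)).trans (Real.rpow_add two_pos 2 (-q))
    have h4 : (2:ℝ)^(2:ℝ) = 4 := by
      have h5 := Real.rpow_natCast (2:ℝ) 2
      rw [show ((2:ℕ):ℝ) = (2:ℝ) by norm_num] at h5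
      rw [h5]; norm_num
    rw [h0, h4]
  rw [e1] at hint
  have hSb := S_bound hq
  rw [← hS, ← hK] at hSb
  have hc0 : (0:ℝ) < (1/2:ℝ)^(2*q-2) * (2 - π/2) := by
    have hπ4 : π < 4 := Real.pi_lt_four
    have hrp : (0:ℝ) < (1/2:ℝ)^(2*q-2) := Real.rpow_pos_of_pos (by norm_num) _
    nlinarith
  have h2q : (0:ℝ) < (2:ℝ)^(-q) := Real.rpow_pos_of_pos two_pos _
  have hprod : 0 ≤ (2:ℝ)^(-q) * (2*S - (K + (1/2:ℝ)^(2*q-2) * (2 - π/2))) :=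
    mul_nonneg h2q.le (by linarith)
  nlinarith [hprod, hint, mul_pos h2q hc0]

lemma Tcos_lower {q : ℝ} (hq2 : 2 < q) :
    (2:ℝ)^(-q) * (∫ u in (0:ℝ)..(π/2), sin u ^ (2*q-2))
      < ∫ u in (0:ℝ)..(π/2), |cos (2*u)| ^ q * sin u ^ (2*q-2) := by
  have hq : 1 < q := by linarith
  have hcos2 : Continuous fun u : ℝ => |cos (2*u)| :=
    continuous_abs.comp (Real.continuous_cos.comp (continuous_const.mul continuous_id))
  have hTc : Continuous fun u : ℝ => |cos (2*u)| ^ q * sin u ^ (2*q-2) :=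
    (cont_rpow_comp (by linarith) hcos2).mul (cont_rpow_comp (by linarith) Real.continuous_sin)
  have hTc' : Continuous fun u : ℝ => |cos (2*u)| ^ q * cos u ^ (2*q-2) :=
    (cont_rpow_comp (by linarith) hcos2).mul (cont_rpow_comp (by linarith) Real.continuous_cos)
  set T := ∫ u in (0:ℝ)..(π/2), |cos (2*u)| ^ q * sin u ^ (2*q-2) with hT
  set K := ∫ u in (0:ℝ)..(π/2), sin u ^ (2*q-2) with hK
  set M := ∫ u in (0:ℝ)..(π/2), sin u ^ q with hM
  have hrefl : T = ∫ u in (0:ℝ)..(π/2), |cos (2*u)| ^ q * cos u ^ (2*q-2) := by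
    have h0 : (∫ u in (0:ℝ)..(π/2), |cos (2*(π/2 - u))| ^ q * sin (π/2 - u) ^ (2*q-2)) = T :=
      reflect_half (fun v => |cos (2*v)| ^ q * sin v ^ (2*q-2))
    rw [← h0]
    apply intervalIntegral.integral_congr
    intro x _
    simp only
    rw [show 2*(π/2 - x) = π - 2*x by ring, Real.cos_pi_sub, abs_neg, Real.sin_pi_div_two_sub]
  have h2T : 2 * T = ∫ u in (0:ℝ)..(π/2),
      |cos (2*u)| ^ q * (sin u ^ (2*q-2) + cos u ^ (2*q-2)) := by
    rw [two_mul]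
    nth_rewrite 2 [hrefl]
    rw [hT, ← intervalIntegral.integral_add (hTc.intervalIntegrable _ _) (hTc'.intervalIntegrable _ _)]
    apply intervalIntegral.integral_congr
    intro x _
    simp only
    ring
  have hpt : ∀ u ∈ Icc (0:ℝ) (π/2),
      (2:ℝ)^(1-q) * |cos (2*u)| ^ q
        ≤ |cos (2*u)| ^ q * (sin u ^ (2*q-2) + cos u ^ (2*q-2)) := by
    intro u hu
    have h1 := sum_rpow_ge hq hu
    have h0 : 0 ≤ |cos (2*u)| ^ q := Real.rpow_nonneg (abs_nonneg _) _
    calc (2:ℝ)^(1-q) * |cos (2*u)| ^ q = |cos (2*u)| ^ q * (2:ℝ)^(1-q) := by ring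
      _ ≤ |cos (2*u)| ^ q * (sin u ^ (2*q-2) + cos u ^ (2*q-2)) :=
          mul_le_mul_of_nonneg_left h1 h0
  have hint : (2:ℝ)^(1-q) * (∫ u in (0:ℝ)..(π/2), |cos (2*u)| ^ q) ≤ 2 * T := by
    rw [h2T, ← intervalIntegral.integral_const_mul]
    apply intervalIntegral.integral_mono_on (by positivity)
      ((continuous_const.mul (cont_rpow_comp (by linarith) hcos2)).intervalIntegrable _ _)
      (((cont_rpow_comp (by linarith : (0:ℝ) < q) hcos2).mul
        ((cont_rpow_comp (by linarith : (0:ℝ) < 2*q-2) Real.continuous_sin).add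
          (cont_rpow_comp (by linarith : (0:ℝ) < 2*q-2) Real.continuous_cos))).intervalIntegrable _ _)
    exact hpt
  have habs : (∫ u in (0:ℝ)..(π/2), |cos (2*u)| ^ q) = M := abs_cos_two_int (by linarith)
  rw [habs] at hint
  have hMK : K < M := by
    rw [hK, hM]
    exact sinpow_lt (by linarith) (by linarith)
  have e1 : (2:ℝ)^(1-q) = 2 * (2:ℝ)^(-q) := by
    have h0 : (2:ℝ)^(1-q) = (2:ℝ)^(1:ℝ) * 2^(-q) :=
      (rpow_congr (by ring)).trans (Real.rpow_add two_pos 1 (-q))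
    rw [h0, Real.rpow_one]
  rw [e1] at hint
  have h2q : (0:ℝ) < (2:ℝ)^(-q) := Real.rpow_pos_of_pos two_pos _
  nlinarith [mul_lt_mul_of_pos_left hMK h2q, hint]

end CpAux4
section CpMain

lemma main_identity {q : ℝ} (hq : 1 < q) (h : ℝ → ℝ) (hc : Continuous h)
    (heven : ∀ s, h (-s) = h s) :
    ∫ s in (-π)..π, h s * (2-2*cos s) ^ (q-1)
      = 4 * ∫ u in (0:ℝ)..(π/2), h (2*u) * (4 * sin u ^ 2) ^ (q-1) := by
  have hfc : Continuous fun s => h s * (2-2*cos s) ^ (q-1) :=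
    hc.mul (cont_rpow_comp (by linarith)
      (continuous_const.sub (continuous_const.mul Real.continuous_cos)))
  have hneg : (∫ s in (-π)..(0:ℝ), h s * (2-2*cos s) ^ (q-1))
      = ∫ s in (0:ℝ)..π, h s * (2-2*cos s) ^ (q-1) := by
    have h1 : (∫ s in (0:ℝ)..π, h (-s) * (2-2*cos (-s)) ^ (q-1))
        = ∫ s in (-π)..(-(0:ℝ)), h s * (2-2*cos s) ^ (q-1) :=
      intervalIntegral.integral_comp_neg (fun s => h s * (2-2*cos s) ^ (q-1))
    rw [neg_zero] at h1
    rw [← h1]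
    apply intervalIntegral.integral_congr
    intro x _
    simp only
    rw [heven, Real.cos_neg]
  have hsplit := intervalIntegral.integral_add_adjacent_intervals (μ := MeasureTheory.volume)
    (hfc.intervalIntegrable (-π) 0) (hfc.intervalIntegrable 0 π)
  have hdouble : (2:ℝ) * ∫ u in (0:ℝ)..(π/2), h (2*u) * (2-2*cos (2*u)) ^ (q-1)
      = ∫ s in (0:ℝ)..π, h s * (2-2*cos s) ^ (q-1) := by
    have h2 := intervalIntegral.smul_integral_comp_mul_left
      (f := fun s => h s * (2-2*cos s) ^ (q-1)) (a := (0:ℝ)) (b := π/2) 2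
    rw [mul_zero, show (2:ℝ)*(π/2) = π by ring, smul_eq_mul] at h2
    exact h2
  have hcong : EqOn (fun u => h (2*u) * (2-2*cos (2*u)) ^ (q-1))
      (fun u => h (2*u) * (4 * sin u ^ 2) ^ (q-1)) (uIcc (0:ℝ) (π/2)) := by
    intro u _
    simp only
    congr 2
    have h1 : sin u ^ 2 + cos u ^ 2 = 1 := Real.sin_sq_add_cos_sq u
    rw [Real.cos_two_mul]
    linear_combination (-4:ℝ) * h1
  calc ∫ s in (-π)..π, h s * (2-2*cos s) ^ (q-1)
      = (∫ s in (-π)..(0:ℝ), h s * (2-2*cos s) ^ (q-1))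
          + ∫ s in (0:ℝ)..π, h s * (2-2*cos s) ^ (q-1) := hsplit.symm
    _ = 2 * ∫ s in (0:ℝ)..π, h s * (2-2*cos s) ^ (q-1) := by rw [hneg]; ring
    _ = 2 * (2 * ∫ u in (0:ℝ)..(π/2), h (2*u) * (2-2*cos (2*u)) ^ (q-1)) := by rw [hdouble]
    _ = 4 * ∫ u in (0:ℝ)..(π/2), h (2*u) * (4 * sin u ^ 2) ^ (q-1) := by
        rw [intervalIntegral.integral_congr hcong]; ring

lemma four_rpow_split {q : ℝ} : (4:ℝ)^q = 4 * 4^(q-1) := by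
  have h0 := Real.rpow_add (show (0:ℝ) < 4 by norm_num) 1 (q-1)
  rw [show (1:ℝ)+(q-1) = q by ring, Real.rpow_one] at h0
  exact h0

lemma main_identity_sin {q : ℝ} (hq : 1 < q) :
    (∫ s in (-π)..π, |sin s| ^ q * (2-2*cos s) ^ (q-1))
      = 4^q * ∫ u in (0:ℝ)..(π/2), sin (2*u) ^ q * sin u ^ (2*q-2) := by
  have h := main_identity hq (fun s => |sin s| ^ q)
    (cont_rpow_comp (by linarith) (continuous_abs.comp Real.continuous_sin))
    (fun s => by simp)
  rw [h]
  have hcong : EqOn (fun u => |sin (2*u)| ^ q * (4 * sin u ^ 2) ^ (q-1))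
      (fun u => 4^(q-1) * (sin (2*u) ^ q * sin u ^ (2*q-2))) (uIcc (0:ℝ) (π/2)) := by
    intro u hu
    rw [uIcc_of_le (by positivity : (0:ℝ) ≤ π/2)] at hu
    have hs : 0 ≤ sin u := sin_nonneg_of_nonneg_of_le_pi hu.1 (by linarith [pi_pos, hu.2])
    have hs2 : 0 ≤ sin (2*u) :=
      sin_nonneg_of_nonneg_of_le_pi (by linarith [hu.1]) (by linarith [hu.2])
    simp only
    rw [abs_of_nonneg hs2, Real.mul_rpow (by norm_num : (0:ℝ) ≤ 4) (sq_nonneg _),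
      sq_rpow hs, rpow_congr (show 2*(q-1) = 2*q-2 by ring)]
    ring
  rw [intervalIntegral.integral_congr hcong, intervalIntegral.integral_const_mul,
    ← mul_assoc, ← four_rpow_split]

lemma main_identity_cos {q : ℝ} (hq : 1 < q) :
    (∫ s in (-π)..π, |cos s| ^ q * (2-2*cos s) ^ (q-1))
      = 4^q * ∫ u in (0:ℝ)..(π/2), |cos (2*u)| ^ q * sin u ^ (2*q-2) := by
  have h := main_identity hq (fun s => |cos s| ^ q)
    (cont_rpow_comp (by linarith) (continuous_abs.comp Real.continuous_cos))
    (fun s => by simp)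
  rw [h]
  have hcong : EqOn (fun u => |cos (2*u)| ^ q * (4 * sin u ^ 2) ^ (q-1))
      (fun u => 4^(q-1) * (|cos (2*u)| ^ q * sin u ^ (2*q-2))) (uIcc (0:ℝ) (π/2)) := by
    intro u hu
    rw [uIcc_of_le (by positivity : (0:ℝ) ≤ π/2)] at hu
    have hs : 0 ≤ sin u := sin_nonneg_of_nonneg_of_le_pi hu.1 (by linarith [pi_pos, hu.2])
    simp only
    rw [Real.mul_rpow (by norm_num : (0:ℝ) ≤ 4) (sq_nonneg _),
      sq_rpow hs, rpow_congr (show 2*(q-1) = 2*q-2 by ring)]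
    ring
  rw [intervalIntegral.integral_congr hcong, intervalIntegral.integral_const_mul,
    ← mul_assoc, ← four_rpow_split]

end CpMain

theorem cp_lt_Cp_lt_two_cp (p q : ℝ) (hp : 1 < p) (hq : q = p / (p - 1)) :
    let cp : ℝ := 2 ^ ((q - 1) / q) * π ^ (-1 + 1 / (2 * q)) *
      (Real.Gamma (q - 1 / 2) / Real.Gamma q) ^ (1 / q)
    let Cp : ℝ :=
      if 2 ≤ p then
        (1 / π) * (∫ s in (-π)..π, |Real.sin s| ^ q * (2 - 2 * Real.cos s) ^ (q - 1)) ^ (1 / q)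
      else
        (1 / π) * (∫ s in (-π)..π, |Real.cos s| ^ q * (2 - 2 * Real.cos s) ^ (q - 1)) ^ (1 / q)
    cp < Cp ∧ Cp < 2 * cp := by
  have hp1 : (0:ℝ) < p - 1 := by linarith
  have hq1 : 1 < q := by rw [hq, one_lt_div hp1]; linarith
  have hq0 : (0:ℝ) < q := by linarith
  intro cp Cp
  have hGamma := K_eq hq1
  set K := ∫ u in (0:ℝ)..(π/2), sin u ^ (2*q-2) with hK
  have hKpos : 0 < K := K_pos hq1
  have hGq : (0:ℝ) < Real.Gamma q := Real.Gamma_pos_of_pos (by linarith)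
  have hπq : (0:ℝ) < π ^ ((1:ℝ)/(2*q)) := Real.rpow_pos_of_pos pi_pos _
  have hratio : Real.Gamma (q-1/2) / Real.Gamma q = 2*K / π ^ ((1:ℝ)/2) := by
    have hsπ : (0:ℝ) < Real.sqrt π := Real.sqrt_pos.2 pi_pos
    rw [← Real.sqrt_eq_rpow, div_eq_div_iff hGq.ne' hsπ.ne']
    have h0 := (div_eq_iff hGq.ne').1 hGamma
    linear_combination h0
  have h2qK : ((2:ℝ)^q) * K > 0 := mul_pos (Real.rpow_pos_of_pos two_pos _) hKpos
  have e4 : ((2:ℝ)^q * K) ^ ((1:ℝ)/q) = 2 * K^((1:ℝ)/q) := by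
    rw [Real.mul_rpow (Real.rpow_nonneg (by norm_num) _) hKpos.le]
    congr 1
    rw [← Real.rpow_mul (by norm_num : (0:ℝ) ≤ 2), mul_one_div, div_self (ne_of_gt hq0),
      Real.rpow_one]
  have hcp : cp = (1/π) * ((2:ℝ)^q * K)^((1:ℝ)/q) := by
    show 2 ^ ((q - 1) / q) * π ^ (-1 + 1 / (2 * q)) *
      (Real.Gamma (q - 1 / 2) / Real.Gamma q) ^ (1 / q) = _
    rw [hratio]
    have e1 : ((2:ℝ)*K / π^((1:ℝ)/2)) ^ ((1:ℝ)/q)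
        = 2^((1:ℝ)/q) * K^((1:ℝ)/q) / π^(1/(2*q)) := by
      rw [Real.div_rpow (by linarith : (0:ℝ) ≤ 2*K) (by positivity),
        Real.mul_rpow (by norm_num) hKpos.le, ← Real.rpow_mul pi_pos.le,
        show (1:ℝ)/2*(1/q) = 1/(2*q) by ring]
    have e2 : π ^ (-1 + 1/(2*q)) = π⁻¹ * π^(1/(2*q)) := by
      rw [Real.rpow_add pi_pos, Real.rpow_neg_one]
    have e3 : (2:ℝ)^((q-1)/q) * 2^((1:ℝ)/q) = 2 := by
      rw [← Real.rpow_add two_pos, show (q-1)/q + 1/q = 1 by rw [← add_div, sub_add_cancel, div_self hq0.ne'], Real.rpow_one]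
    have expand : 2 ^ ((q - 1) / q) * (π⁻¹ * π^(1/(2*q)))
          * (2^((1:ℝ)/q) * K^((1:ℝ)/q) / π^(1/(2*q)))
        = (2 ^ ((q-1)/q) * 2^((1:ℝ)/q)) * K^((1:ℝ)/q) * π⁻¹
          * (π^(1/(2*q)) / π^(1/(2*q))) := by ring
    rw [e1, e2, expand, e3, div_self hπq.ne', e4]
    ring
  have key : ∀ I : ℝ, (2:ℝ)^q * K < I → I < (2:ℝ)^q * ((2:ℝ)^q * K) →
      (1/π) * ((2:ℝ)^q * K)^((1:ℝ)/q) < (1/π) * I ^ ((1:ℝ)/q)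
        ∧ (1/π) * I ^ ((1:ℝ)/q) < 2 * ((1/π) * ((2:ℝ)^q * K)^((1:ℝ)/q)) := by
    intro I hlow hupp
    have hπinv : (0:ℝ) < 1/π := by positivity
    constructor
    · exact mul_lt_mul_of_pos_left
        (Real.rpow_lt_rpow h2qK.le hlow (one_div_pos.2 hq0)) hπinv
    · have h2cp : 2 * ((1/π) * ((2:ℝ)^q*K)^((1:ℝ)/q))
          = (1/π) * ((2:ℝ)^q * ((2:ℝ)^q*K))^((1:ℝ)/q) := by
        rw [Real.mul_rpow (Real.rpow_nonneg (by norm_num) _) h2qK.le]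
        rw [← Real.rpow_mul (by norm_num : (0:ℝ) ≤ 2), mul_one_div,
          div_self (ne_of_gt hq0), Real.rpow_one]
        ring
      rw [h2cp]
      exact mul_lt_mul_of_pos_left
        (Real.rpow_lt_rpow (h2qK.trans hlow).le hupp (one_div_pos.2 hq0)) hπinv
  have h4eq : (4:ℝ)^q = (2:ℝ)^q * (2:ℝ)^q := by
    rw [show (4:ℝ) = 2*2 by norm_num, Real.mul_rpow (by norm_num) (by norm_num)]
  have h2two : ((2:ℝ)^q) * ((2:ℝ)^(-q)) = 1 := by
    rw [← Real.rpow_add two_pos, show q + -q = 0 by ring, Real.rpow_zero]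
  have h4pos : (0:ℝ) < (4:ℝ)^q := Real.rpow_pos_of_pos (by norm_num) _
  by_cases hp2 : 2 ≤ p
  · have hq2 : q ≤ 2 := by rw [hq, div_le_iff₀ hp1]; linarith
    have hCp : Cp = (1/π) * (∫ s in (-π)..π, |Real.sin s| ^ q
        * (2 - 2 * Real.cos s) ^ (q - 1)) ^ ((1:ℝ)/q) := by
      show (if 2 ≤ p then _ else _) = _
      rw [if_pos hp2]
    set I := ∫ s in (-π)..π, |Real.sin s| ^ q * (2 - 2 * Real.cos s) ^ (q - 1) with hI
    have hIval : I = 4^q * ∫ u in (0:ℝ)..(π/2), sin (2*u) ^ q * sin u ^ (2*q-2) :=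
      main_identity_sin hq1
    have hTup : (∫ u in (0:ℝ)..(π/2), sin (2*u) ^ q * sin u ^ (2*q-2)) < K := by
      rw [hK]
      have hw : Continuous fun u : ℝ => sin (2*u) ^ q :=
        cont_rpow_comp hq0 (Real.continuous_sin.comp (continuous_const.mul continuous_id))
      apply T_lt_K hq1 hw
      · intro u hu
        exact Real.rpow_nonneg (sin_nonneg_of_nonneg_of_le_pi (by linarith [hu.1])
          (by linarith [hu.2])) _
      · intro u hu
        exact Real.rpow_le_one (sin_nonneg_of_nonneg_of_le_pi (by linarith [hu.1])
          (by linarith [hu.2])) (Real.sin_le_one _) hq0.le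
      · intro u hu
        apply Real.rpow_lt_one (sin_nonneg_of_nonneg_of_le_pi (by linarith [pi_pos, hu.1])
          (by linarith [pi_pos, hu.2])) _ hq0
        have hmem1 : 2*u ∈ Icc (-(π/2)) (π/2) :=
          ⟨by linarith [pi_pos, hu.1], by linarith [hu.2]⟩
        have h0 := Real.strictMonoOn_sin hmem1
          ⟨by linarith [pi_pos], le_refl _⟩ (by linarith [hu.2])
        rwa [Real.sin_pi_div_two] at h0
    have hTlo := Tsin_lower hq1
    rw [← hK] at hTlo
    have hlow : (2:ℝ)^q * K < I := by
      rw [hIval]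
      calc (2:ℝ)^q * K = 4^q * ((2:ℝ)^(-q) * K) := by
            rw [h4eq]
            calc (2:ℝ)^q * K = ((2:ℝ)^q * ((2:ℝ)^q * (2:ℝ)^(-q))) * K := by rw [h2two]; ring
              _ = (2:ℝ)^q * (2:ℝ)^q * ((2:ℝ)^(-q) * K) := by ring
        _ < 4^q * ∫ u in (0:ℝ)..(π/2), sin (2*u) ^ q * sin u ^ (2*q-2) :=
            mul_lt_mul_of_pos_left hTlo h4pos
    have hupp : I < (2:ℝ)^q * ((2:ℝ)^q * K) := by
      rw [hIval]
      calc (4:ℝ)^q * ∫ u in (0:ℝ)..(π/2), sin (2*u) ^ q * sin u ^ (2*q-2)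
          < 4^q * K := mul_lt_mul_of_pos_left hTup h4pos
        _ = (2:ℝ)^q * ((2:ℝ)^q * K) := by rw [h4eq]; ring
    have hres := key I hlow hupp
    rw [hcp, hCp]
    exact hres
  · have hq2 : 2 < q := by
      rw [hq, lt_div_iff₀ hp1]
      push_neg at hp2
      linarith
    have hCp : Cp = (1/π) * (∫ s in (-π)..π, |Real.cos s| ^ q
        * (2 - 2 * Real.cos s) ^ (q - 1)) ^ ((1:ℝ)/q) := by
      show (if 2 ≤ p then _ else _) = _
      rw [if_neg hp2]
    set I := ∫ s in (-π)..π, |Real.cos s| ^ q * (2 - 2 * Real.cos s) ^ (q - 1) with hI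
    have hIval : I = 4^q * ∫ u in (0:ℝ)..(π/2), |cos (2*u)| ^ q * sin u ^ (2*q-2) :=
      main_identity_cos hq1
    have hTup : (∫ u in (0:ℝ)..(π/2), |cos (2*u)| ^ q * sin u ^ (2*q-2)) < K := by
      rw [hK]
      have hw : Continuous fun u : ℝ => |cos (2*u)| ^ q :=
        cont_rpow_comp hq0 (continuous_abs.comp
          (Real.continuous_cos.comp (continuous_const.mul continuous_id)))
      apply T_lt_K hq1 hw
      · intro u hu
        exact Real.rpow_nonneg (abs_nonneg _) _
      · intro u hu
        exact Real.rpow_le_one (abs_nonneg _) (Real.abs_cos_le_one _) hq0.le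
      · intro u hu
        apply Real.rpow_lt_one (abs_nonneg _) _ hq0
        have hcpos : 0 < cos (2*u) :=
          Real.cos_pos_of_mem_Ioo ⟨by linarith [pi_pos, hu.1], by linarith [hu.2]⟩
        have hlt1 : cos (2*u) < 1 := by
          have h0 : cos (2*u) < cos 0 := Real.strictAntiOn_cos ⟨le_refl (0:ℝ), pi_pos.le⟩
            ⟨by linarith [hu.1], by linarith [pi_pos, hu.2]⟩ (by linarith [hu.1])
          rwa [Real.cos_zero] at h0
        rw [abs_of_pos hcpos]
        exact hlt1
    have hTlo := Tcos_lower hq2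
    rw [← hK] at hTlo
    have hlow : (2:ℝ)^q * K < I := by
      rw [hIval]
      calc (2:ℝ)^q * K = 4^q * ((2:ℝ)^(-q) * K) := by
            rw [h4eq]
            calc (2:ℝ)^q * K = ((2:ℝ)^q * ((2:ℝ)^q * (2:ℝ)^(-q))) * K := by rw [h2two]; ring
              _ = (2:ℝ)^q * (2:ℝ)^q * ((2:ℝ)^(-q) * K) := by ring
        _ < 4^q * ∫ u in (0:ℝ)..(π/2), |cos (2*u)| ^ q * sin u ^ (2*q-2) :=
            mul_lt_mul_of_pos_left hTlo h4pos
    have hupp : I < (2:ℝ)^q * ((2:ℝ)^q * K) := by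
      rw [hIval]
      calc (4:ℝ)^q * ∫ u in (0:ℝ)..(π/2), |cos (2*u)| ^ q * sin u ^ (2*q-2)
          < 4^q * K := mul_lt_mul_of_pos_left hTup h4pos
        _ = (2:ℝ)^q * ((2:ℝ)^q * K) := by rw [h4eq]; ring
    have hres := key I hlow hupp
    rw [hcp, hCp]
    exact hres
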